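/- In a Boolean algebra with a total preorder ≿ satisfying monotonicity (β → α implies α ≿ β) and quasi-additivity (α ≿ β iff (α ∧ ¬β) ≿ (β ∧ ¬α)), the following cancellation rule holds: for pairwise incompatible α, β, γ, δ, ε, ζ, if (α ∨ ε) ≿ (γ ∨ ζ) and (β ∨ ζ) ≿ (δ ∨ ε), then (α ∨ β) ≿ (γ ∨ δ). -/
import Mathlib

private lemma meet_eq {B : Type*} [BooleanAlgebra B] {g t d : B}
    (hg : g ⊓ d = ⊥) : (g ⊔ d) ⊓ (t ⊔ d)ᶜ = g ⊓ tᶜ := by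
  have hgd : g ⊓ dᶜ = g := inf_eq_left.2 ((disjoint_iff.2 hg).le_compl_right)
  rw [compl_sup, inf_sup_right]
  rw [show d ⊓ (tᶜ ⊓ dᶜ) = tᶜ ⊓ (d ⊓ dᶜ) by rw [inf_left_comm], inf_compl_self,
    inf_bot_eq, sup_bot_eq, show g ⊓ (tᶜ ⊓ dᶜ) = (g ⊓ dᶜ) ⊓ tᶜ by
      rw [inf_assoc, inf_comm tᶜ], hgd]

private lemma radd {B : Type*} [BooleanAlgebra B] (r : B → B → Prop)
    (hquasi : ∀ x y, r x y ↔ r (x ⊓ yᶜ) (y ⊓ xᶜ))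
    {g t d : B} (hg : g ⊓ d = ⊥) (ht : t ⊓ d = ⊥) :
    r (g ⊔ d) (t ⊔ d) ↔ r g t := by
  rw [hquasi (g ⊔ d), hquasi g, meet_eq hg, meet_eq ht]

theorem stmt_5 {B : Type*} [BooleanAlgebra B] (r : B → B → Prop)
    (htrans : ∀ x y z, r x y → r y z → r x z)
    (htot : ∀ x y, r x y ∨ r y x)
    (hdist : ∀ x y, y ≤ x → r x y)
    (hquasi : ∀ x y, r x y ↔ r (x ⊓ yᶜ) (y ⊓ xᶜ))
    (a b c d e f : B)
    (hpair : ([a, b, c, d, e, f] : List B).Pairwise fun x y => x ⊓ y = ⊥)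
    (h1 : r (a ⊔ e) (c ⊔ f)) (h2 : r (b ⊔ f) (d ⊔ e)) :
    r (a ⊔ b) (c ⊔ d) := by
  simp only [List.pairwise_cons, List.mem_cons, List.mem_singleton,
    List.not_mem_nil, forall_eq_or_imp, forall_eq] at hpair
  obtain ⟨⟨hab, hac, had, hae, haf, -⟩, ⟨hbc, hbd, hbe, hbf, -⟩, ⟨hcd, hce, hcf, -⟩,
    ⟨hde, hdf, -⟩, ⟨hef, -⟩, -⟩ := hpair
  have sym : ∀ x y : B, x ⊓ y = ⊥ → y ⊓ x = ⊥ := fun x y h => by rwa [inf_comm]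
  -- add b to h1
  have h1' : r (a ⊔ e ⊔ b) (c ⊔ f ⊔ b) := by
    rw [radd r hquasi (by simp [inf_sup_right, hab, hac, had, hae, haf, hbc, hbd, hbe, hbf, hcd, hce, hcf, hde, hdf, hef, sym _ _ hab, sym _ _ hac, sym _ _ had, sym _ _ hae, sym _ _ haf, sym _ _ hbc, sym _ _ hbd, sym _ _ hbe, sym _ _ hbf, sym _ _ hcd, sym _ _ hce, sym _ _ hcf, sym _ _ hde, sym _ _ hdf, sym _ _ hef])
      (by simp [inf_sup_right, hab, hac, had, hae, haf, hbc, hbd, hbe, hbf, hcd, hce, hcf, hde, hdf, hef, sym _ _ hab, sym _ _ hac, sym _ _ had, sym _ _ hae, sym _ _ haf, sym _ _ hbc, sym _ _ hbd, sym _ _ hbe, sym _ _ hbf, sym _ _ hcd, sym _ _ hce, sym _ _ hcf, sym _ _ hde, sym _ _ hdf, sym _ _ hef])]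
    exact h1
  -- add c to h2
  have h2' : r (b ⊔ f ⊔ c) (d ⊔ e ⊔ c) := by
    rw [radd r hquasi (by simp [inf_sup_right, hab, hac, had, hae, haf, hbc, hbd, hbe, hbf, hcd, hce, hcf, hde, hdf, hef, sym _ _ hab, sym _ _ hac, sym _ _ had, sym _ _ hae, sym _ _ haf, sym _ _ hbc, sym _ _ hbd, sym _ _ hbe, sym _ _ hbf, sym _ _ hcd, sym _ _ hce, sym _ _ hcf, sym _ _ hde, sym _ _ hdf, sym _ _ hef])
      (by simp [inf_sup_right, hab, hac, had, hae, haf, hbc, hbd, hbe, hbf, hcd, hce, hcf, hde, hdf, hef, sym _ _ hab, sym _ _ hac, sym _ _ had, sym _ _ hae, sym _ _ haf, sym _ _ hbc, sym _ _ hbd, sym _ _ hbe, sym _ _ hbf, sym _ _ hcd, sym _ _ hce, sym _ _ hcf, sym _ _ hde, sym _ _ hdf, sym _ _ hef])]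
    exact h2
  have hmid : c ⊔ f ⊔ b = b ⊔ f ⊔ c := by ac_rfl
  rw [hmid] at h1'
  have h3 : r (a ⊔ e ⊔ b) (d ⊔ e ⊔ c) := htrans _ _ _ h1' h2'
  have h3' : r (a ⊔ b ⊔ e) (c ⊔ d ⊔ e) := by
    rw [show a ⊔ b ⊔ e = a ⊔ e ⊔ b by ac_rfl, show c ⊔ d ⊔ e = d ⊔ e ⊔ c by ac_rfl]
    exact h3
  rw [radd r hquasi (by simp [inf_sup_right, hab, hac, had, hae, haf, hbc, hbd, hbe, hbf, hcd, hce, hcf, hde, hdf, hef, sym _ _ hab, sym _ _ hac, sym _ _ had, sym _ _ hae, sym _ _ haf, sym _ _ hbc, sym _ _ hbd, sym _ _ hbe, sym _ _ hbf, sym _ _ hcd, sym _ _ hce, sym _ _ hcf, sym _ _ hde, sym _ _ hdf, sym _ _ hef])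
    (by simp [inf_sup_right, hab, hac, had, hae, haf, hbc, hbd, hbe, hbf, hcd, hce, hcf, hde, hdf, hef, sym _ _ hab, sym _ _ hac, sym _ _ had, sym _ _ hae, sym _ _ haf, sym _ _ hbc, sym _ _ hbd, sym _ _ hbe, sym _ _ hbf, sym _ _ hcd, sym _ _ hce, sym _ _ hcf, sym _ _ hde, sym _ _ hdf, sym _ _ hef])] at h3'
  exact h3'
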